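/- Let h > 0 and let T : ℝ → ℝ be given by T(x) = x - h·x³. Then the pushforward measure T_♯γ of the standard Gaussian measure γ on ℝ under T admits no continuous Lebesgue density: there is no continuous function f : ℝ → ℝ such that Measure.map T γ equals the Lebesgue measure with density x ↦ ENNReal.ofReal (f x). -/

import Mathlib

set_option maxHeartbeats 1000000

open MeasureTheory ProbabilityTheory

/-- For any step size `h > 0`, the pushforward of the standard Gaussian
measure under the forward-Euler map `T x = x - h * x ^ 3` admits no continuous
Lebesgue density. -/
theorem forwardEuler_pushforward_gaussian_no_continuous_density
    (h : ℝ) (hh : 0 < h) :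
    ¬ ∃ f : ℝ → ℝ, Continuous f ∧
      Measure.map (fun x : ℝ => x - h * x ^ 3) (gaussianReal 0 1) =
        volume.withDensity (fun x => ENNReal.ofReal (f x)) := by
  rintro ⟨f, hf, hmap⟩
  -- critical point of T
  set x₀ : ℝ := Real.sqrt (1 / (3 * h)) with hx₀def
  have hx₀ : 0 < x₀ := Real.sqrt_pos.mpr (by positivity)
  have hsq : 3 * h * x₀ ^ 2 = 1 := by
    have : x₀ ^ 2 = 1 / (3 * h) := Real.sq_sqrt (by positivity)
    rw [this]; field_simp
  set c : ℝ := x₀ - h * x₀ ^ 3 with hcdef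
  -- lower bound on the gaussian density near x₀
  set m : ℝ := gaussianPDFReal 0 1 (2 * x₀) with hmdef
  have hm : 0 < m := gaussianPDFReal_pos 0 1 (2 * x₀) (by norm_num)
  -- bound for f near c
  obtain ⟨z, hz, hzmax⟩ := isCompact_Icc.exists_isMaxOn
    (Set.nonempty_Icc.mpr (by linarith : c - 1 ≤ c + 1)) (hf.continuousOn (s := Set.Icc (c-1) (c+1)))
  set B : ℝ := max (f z) 1 with hBdef
  have hB : 0 < B := lt_max_of_lt_right one_pos
  set q : ℝ := Real.sqrt (4 * h * x₀) with hqdef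
  have hq : 0 < q := Real.sqrt_pos.mpr (by positivity)
  have hqsq : q ^ 2 = 4 * h * x₀ := Real.sq_sqrt (by positivity)
  -- choice of epsilon
  set ε : ℝ := min (min 1 (4 * h * x₀ ^ 3)) ((m / (2 * B * q)) ^ 2) with hεdef
  have hε : 0 < ε := lt_min (lt_min one_pos (by positivity)) (by positivity)
  have hε1 : ε ≤ 1 := le_trans (min_le_left _ _) (min_le_left _ _)
  have hε2 : ε ≤ 4 * h * x₀ ^ 3 := le_trans (min_le_left _ _) (min_le_right _ _)
  have hε3 : ε ≤ (m / (2 * B * q)) ^ 2 := min_le_right _ _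
  set δ : ℝ := Real.sqrt (ε / (4 * h * x₀)) with hδdef
  have hδ : 0 < δ := Real.sqrt_pos.mpr (by positivity)
  have hδsq : δ ^ 2 = ε / (4 * h * x₀) := Real.sq_sqrt (by positivity)
  have hδx₀ : δ ≤ x₀ := by
    have h1 : δ ^ 2 ≤ x₀ ^ 2 := by
      rw [hδsq, div_le_iff₀ (by positivity)]
      nlinarith
    nlinarith
  -- the interval J maps into Icc (c-ε) (c+ε)
  have hTmem : ∀ x ∈ Set.Icc (x₀ - δ) (x₀ + δ),
      x - h * x ^ 3 ∈ Set.Icc (c - ε) (c + ε) := by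
    intro x hx
    obtain ⟨hx1, hx2⟩ := hx
    have hid : x - h * x ^ 3 - c = -(h * (x - x₀) ^ 2 * (x + 2 * x₀)) := by
      rw [hcdef]; linear_combination (x₀ - x) * hsq
    have h4 : h * δ ^ 2 * (4 * x₀) = ε := by
      rw [hδsq]; field_simp
    have ht : (x - x₀) ^ 2 ≤ δ ^ 2 := by nlinarith
    have hub : x + 2 * x₀ ≤ 4 * x₀ := by linarith
    have hlb : (0:ℝ) ≤ x + 2 * x₀ := by linarith
    have hmm : (x - x₀) ^ 2 * (x + 2 * x₀) ≤ δ ^ 2 * (4 * x₀) :=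
      mul_le_mul ht hub hlb (sq_nonneg δ)
    have hmm2 : h * ((x - x₀) ^ 2 * (x + 2 * x₀)) ≤ h * (δ ^ 2 * (4 * x₀)) :=
      mul_le_mul_of_nonneg_left hmm hh.le
    have hkey : h * (x - x₀) ^ 2 * (x + 2 * x₀) ≤ ε := by nlinarith
    have hkey0 : 0 ≤ h * (x - x₀) ^ 2 * (x + 2 * x₀) := by positivity
    constructor
    · linarith
    · linarith
  -- measurability facts
  have hTmeas : Measurable fun x : ℝ => x - h * x ^ 3 := by fun_prop
  have hIccMeas : MeasurableSet (Set.Icc (c - ε) (c + ε)) := measurableSet_Icc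
  -- lower bound for the gaussian measure of J
  have hlow : ENNReal.ofReal m * ENNReal.ofReal (2 * δ) ≤
      (gaussianReal 0 1) (Set.Icc (x₀ - δ) (x₀ + δ)) := by
    rw [gaussianReal_apply 0 (by norm_num) _]
    calc ENNReal.ofReal m * ENNReal.ofReal (2 * δ)
        = ∫⁻ _ in Set.Icc (x₀ - δ) (x₀ + δ), ENNReal.ofReal m := by
          rw [setLIntegral_const, Real.volume_Icc]
          congr 1
          ring_nf
      _ ≤ ∫⁻ x in Set.Icc (x₀ - δ) (x₀ + δ), gaussianPDF 0 1 x := by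
          refine setLIntegral_mono (measurable_gaussianPDF 0 1) fun x hx => ?_
          rw [gaussianPDF_def]
          refine ENNReal.ofReal_le_ofReal ?_
          obtain ⟨hx1, hx2⟩ := hx
          rw [hmdef]
          simp only [gaussianPDFReal, NNReal.coe_one, mul_one, sub_zero]
          refine mul_le_mul_of_nonneg_left (Real.exp_le_exp.mpr ?_) (by positivity)
          rw [div_le_div_iff_of_pos_right (by norm_num), neg_le_neg_iff]
          nlinarith
  -- upper bound for the density measure of Icc (c-ε) (c+ε)
  have hup : (volume.withDensity fun x => ENNReal.ofReal (f x)) (Set.Icc (c - ε) (c + ε)) ≤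
      ENNReal.ofReal B * ENNReal.ofReal (2 * ε) := by
    rw [withDensity_apply _ hIccMeas]
    calc ∫⁻ x in Set.Icc (c - ε) (c + ε), ENNReal.ofReal (f x)
        ≤ ∫⁻ _ in Set.Icc (c - ε) (c + ε), ENNReal.ofReal B := by
          refine setLIntegral_mono measurable_const fun x hx => ?_
          refine ENNReal.ofReal_le_ofReal ?_
          refine le_trans (hzmax ?_) (le_max_left _ _)
          obtain ⟨hx1, hx2⟩ := hx
          constructor <;> linarith
      _ = ENNReal.ofReal B * ENNReal.ofReal (2 * ε) := by
          rw [setLIntegral_const, Real.volume_Icc]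
          congr 1
          ring_nf
  -- combine
  have hsub : Set.Icc (x₀ - δ) (x₀ + δ) ⊆
      (fun x : ℝ => x - h * x ^ 3) ⁻¹' Set.Icc (c - ε) (c + ε) := fun x hx => hTmem x hx
  have hchain : ENNReal.ofReal m * ENNReal.ofReal (2 * δ) ≤
      ENNReal.ofReal B * ENNReal.ofReal (2 * ε) := by
    calc ENNReal.ofReal m * ENNReal.ofReal (2 * δ)
        ≤ (gaussianReal 0 1) (Set.Icc (x₀ - δ) (x₀ + δ)) := hlow
      _ ≤ (gaussianReal 0 1) ((fun x : ℝ => x - h * x ^ 3) ⁻¹' Set.Icc (c - ε) (c + ε)) :=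
          measure_mono hsub
      _ = Measure.map (fun x : ℝ => x - h * x ^ 3) (gaussianReal 0 1)
            (Set.Icc (c - ε) (c + ε)) := (Measure.map_apply hTmeas hIccMeas).symm
      _ = (volume.withDensity fun x => ENNReal.ofReal (f x)) (Set.Icc (c - ε) (c + ε)) := by
          rw [hmap]
      _ ≤ ENNReal.ofReal B * ENNReal.ofReal (2 * ε) := hup
  rw [← ENNReal.ofReal_mul hm.le, ← ENNReal.ofReal_mul hB.le] at hchain
  rw [ENNReal.ofReal_le_ofReal_iff (by positivity)] at hchain
  -- derive the contradiction
  have hsε : Real.sqrt ε ≤ m / (2 * B * q) := by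
    have := Real.sqrt_le_sqrt hε3
    rwa [Real.sqrt_sq (by positivity)] at this
  have hsεsq : (Real.sqrt ε) ^ 2 = ε := Real.sq_sqrt hε.le
  have hδq : δ * q = Real.sqrt ε := by
    rw [hδdef, hqdef, ← Real.sqrt_mul (by positivity)]
    congr 1
    field_simp
  have hsεpos : 0 < Real.sqrt ε := Real.sqrt_pos.mpr hε
  have h1 : Real.sqrt ε * (2 * B * q) ≤ m := (le_div_iff₀ (by positivity)).mp hsε
  have h2 : 2 * B * ε ≤ m * δ := by
    have h3 := mul_le_mul_of_nonneg_right h1 hδ.le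
    have h4 : Real.sqrt ε * (2 * B * q) * δ = 2 * B * ε := by
      linear_combination (2 * B * Real.sqrt ε) * hδq + 2 * B * hsεsq
    linarith
  nlinarith [mul_pos hm hδ]
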